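/- Let α = π[x_∂, y_∂′] be a preprojective arc of P_{g,h} that is not equal to any projective arc β_i (0 ≤ i ≤ n). Then τα = π[(x+1)_∂, (y−1)_∂′] is preprojective, both arcs π[(x+1)_∂, y_∂′] and π[x_∂, (y−1)_∂′] are preprojective, the set of arcs admitting an elementary move to α equals {π[(x+1)_∂, y_∂′], π[x_∂, (y−1)_∂′]}, and this set equals the set of arcs reachable from τα by a single elementary move (the mesh at α). -/

import Mathlib

/-- Shift the first entry of every point of `A` by `d` (well defined on arcs, since it
commutes with the deck transformations). -/
def shiftFst (d : ℤ) (A : Set (ℤ × ℤ)) : Set (ℤ × ℤ) := (fun p => (p.1 + d, p.2)) '' A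

/-- Shift the second entry of every point of `A` by `d` (well defined on arcs). -/
def shiftSnd (d : ℤ) (A : Set (ℤ × ℤ)) : Set (ℤ × ℤ) := (fun p => (p.1, p.2 + d)) '' A

/-- The bridging arc `π[x_∂, y_∂']` of the annulus `P_{g,h}`, from the outer boundary `∂`
to the inner boundary `∂'`: the orbit of `(x, y) ∈ ℤ × ℤ` under `σ·(x,y) = (x+g, y+h)`. -/
def orbPP (g h x y : ℤ) : Set (ℤ × ℤ) := {q : ℤ × ℤ | ∃ k : ℤ, q = (x + k * g, y + k * h)}

/-- Elementary moves between bridging arcs from `∂` to `∂'`: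
`π[x_∂, y_∂'] → π[(x-1)_∂, y_∂']` and `π[x_∂, y_∂'] → π[x_∂, (y+1)_∂']`. -/
def elemPP (A B : Set (ℤ × ℤ)) : Prop := B = shiftFst (-1) A ∨ B = shiftSnd 1 A

/-- A bridging arc from `∂` to `∂'` is preprojective if it can be reached from
`β_g = π[0_∂, 0_∂']` by a finite (possibly empty) sequence of elementary moves. -/
def IsPreproj (g h : ℤ) (A : Set (ℤ × ℤ)) : Prop :=
  Relation.ReflTransGen elemPP (orbPP g h 0 0) A

/-- The projective arcs: `β_i = π[(i-g)_∂, 0_∂']` for `0 ≤ i ≤ g` and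
`β_i = π[0_∂, (i-g)_∂']` for `g < i ≤ n`. -/
def betaArc (g h i : ℤ) : Set (ℤ × ℤ) :=
  if i ≤ g then orbPP g h (i - g) 0 else orbPP g h 0 (i - g)

/-- The translation `τ`, acting on bridging arcs from `∂` to `∂'`:
`π[x_∂, y_∂'] ↦ π[(x+1)_∂, (y-1)_∂']`. -/
def tauOutIn (A : Set (ℤ × ℤ)) : Set (ℤ × ℤ) := (fun p => (p.1 + 1, p.2 - 1)) '' A

lemma shiftFst_orb (g h x y d : ℤ) : shiftFst d (orbPP g h x y) = orbPP g h (x + d) y := by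
  ext q
  constructor
  · rintro ⟨p, ⟨k, rfl⟩, rfl⟩
    exact ⟨k, by simp [Prod.ext_iff]; ring⟩
  · rintro ⟨k, rfl⟩
    exact ⟨(x + k * g, y + k * h), ⟨k, rfl⟩, by simp [Prod.ext_iff]; ring⟩

lemma shiftSnd_orb (g h x y d : ℤ) : shiftSnd d (orbPP g h x y) = orbPP g h x (y + d) := by
  ext q
  constructor
  · rintro ⟨p, ⟨k, rfl⟩, rfl⟩
    exact ⟨k, by simp [Prod.ext_iff]; ring⟩
  · rintro ⟨k, rfl⟩
    exact ⟨(x + k * g, y + k * h), ⟨k, rfl⟩, by simp [Prod.ext_iff]; ring⟩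

lemma tau_orb (g h x y : ℤ) : tauOutIn (orbPP g h x y) = orbPP g h (x + 1) (y - 1) := by
  ext q
  constructor
  · rintro ⟨p, ⟨k, rfl⟩, rfl⟩
    exact ⟨k, by simp [Prod.ext_iff]; constructor <;> ring⟩
  · rintro ⟨k, rfl⟩
    exact ⟨(x + k * g, y + k * h), ⟨k, rfl⟩, by simp [Prod.ext_iff]; constructor <;> ring⟩

lemma orb_eq (g h x y x' y' t : ℤ) (hx : x' = x + t * g) (hy : y' = y + t * h) :
    orbPP g h x y = orbPP g h x' y' := by
  subst hx hy
  ext q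
  constructor
  · rintro ⟨k, rfl⟩
    exact ⟨k - t, by simp [Prod.ext_iff]; constructor <;> ring⟩
  · rintro ⟨k, rfl⟩
    exact ⟨k + t, by simp [Prod.ext_iff]; constructor <;> ring⟩

lemma preproj_nat (g h : ℤ) (m k : ℕ) : IsPreproj g h (orbPP g h (-(m : ℤ)) (k : ℤ)) := by
  induction k with
  | zero =>
    induction m with
    | zero => simp only [Nat.cast_zero, neg_zero]; exact Relation.ReflTransGen.refl
    | succ m ih =>
      refine ih.tail (Or.inl ?_)
      rw [shiftFst_orb]
      congr 1 <;> push_cast <;> ring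
  | succ k ih =>
    refine ih.tail (Or.inr ?_)
    rw [shiftSnd_orb]
    congr 1 <;> push_cast <;> ring

lemma preproj_of (g h x y t : ℤ) (hx : x ≤ t * g) (hy : t * h ≤ y) :
    IsPreproj g h (orbPP g h x y) := by
  have e : orbPP g h x y = orbPP g h (-(((t * g - x).toNat : ℤ))) (((y - t * h).toNat : ℤ)) := by
    rw [Int.toNat_of_nonneg (by linarith), Int.toNat_of_nonneg (by linarith)]
    exact orb_eq g h x y _ _ (-t) (by ring) (by ring)
  rw [e]; exact preproj_nat g h _ _

lemma preproj_char (g h x y : ℤ) (hpre : IsPreproj g h (orbPP g h x y)) :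
    ∃ t : ℤ, x ≤ t * g ∧ t * h ≤ y := by
  have main : ∀ A : Set (ℤ × ℤ), IsPreproj g h A →
      ∃ a b t : ℤ, A = orbPP g h a b ∧ a ≤ t * g ∧ t * h ≤ b := by
    intro A hA
    induction hA with
    | refl => exact ⟨0, 0, 0, rfl, by rw [zero_mul], by rw [zero_mul]⟩
    | tail _ hbc ih =>
      obtain ⟨a, b, t, rfl, h1, h2⟩ := ih
      rcases hbc with rfl | rfl
      · exact ⟨a - 1, b, t, shiftFst_orb g h a b (-1), by linarith, h2⟩
      · exact ⟨a, b + 1, t, shiftSnd_orb g h a b 1, h1, by linarith⟩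
  obtain ⟨a, b, t, hAB, h1, h2⟩ := main _ hpre
  have hmem : (a, b) ∈ orbPP g h x y := by rw [hAB]; exact ⟨0, by simp⟩
  obtain ⟨k, hk⟩ := hmem
  simp only [Prod.mk.injEq] at hk
  obtain ⟨hk1, hk2⟩ := hk
  refine ⟨t - k, ?_, ?_⟩
  · have : (t - k) * g = t * g - k * g := by ring
    rw [hk1] at h1
    linarith
  · have : (t - k) * h = t * h - k * h := by ring
    rw [hk2] at h2
    linarith

lemma shiftFst_injective (d : ℤ) : Function.Injective (shiftFst d) := by
  apply Set.image_injective.mpr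
  rintro ⟨a, b⟩ ⟨c, e⟩ hpq
  simp only [Prod.mk.injEq] at hpq ⊢
  omega

lemma shiftSnd_injective (d : ℤ) : Function.Injective (shiftSnd d) := by
  apply Set.image_injective.mpr
  rintro ⟨a, b⟩ ⟨c, e⟩ hpq
  simp only [Prod.mk.injEq] at hpq ⊢
  omega


/-- if `α = π[x_∂, y_∂']` is a preprojective arc which is not projective,
then `τα = π[(x+1)_∂, (y-1)_∂']` is preprojective, both `π[(x+1)_∂, y_∂']` and
`π[x_∂, (y-1)_∂']` are preprojective, the set of arcs with an elementary move to `α`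
equals `{π[(x+1)_∂, y_∂'], π[x_∂, (y-1)_∂']}`, and this set also equals the set of arcs
reachable from `τα` by a single elementary move (the mesh at `α`). -/
theorem mesh_at_nonprojective (g h n : ℤ) (hh : 1 ≤ h) (hgh : h ≤ g)
    (hn : n = g + h - 1) (x y : ℤ)
    (hpre : IsPreproj g h (orbPP g h x y))
    (hnotproj : ∀ i : ℤ, 0 ≤ i → i ≤ n → orbPP g h x y ≠ betaArc g h i) :
    tauOutIn (orbPP g h x y) = orbPP g h (x + 1) (y - 1) ∧
    IsPreproj g h (orbPP g h (x + 1) (y - 1)) ∧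
    IsPreproj g h (orbPP g h (x + 1) y) ∧
    IsPreproj g h (orbPP g h x (y - 1)) ∧
    {B : Set (ℤ × ℤ) | elemPP B (orbPP g h x y)}
      = {orbPP g h (x + 1) y, orbPP g h x (y - 1)} ∧
    {B : Set (ℤ × ℤ) | elemPP B (orbPP g h x y)}
      = {C : Set (ℤ × ℤ) | elemPP (orbPP g h (x + 1) (y - 1)) C} := by
  have hg : (1 : ℤ) ≤ g := le_trans hh hgh
  obtain ⟨t, hx, hy⟩ := preproj_char g h x y hpre
  have E : ∀ a b : ℤ, orbPP g h a b = orbPP g h (a - t * g) (b - t * h) :=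
    fun a b => orb_eq g h a b _ _ (-t) (by ring) (by ring)
  -- key nonprojectivity consequences
  have key1 : x - t * g = 0 → h ≤ y - t * h := by
    intro hxz
    by_contra hlt
    push_neg at hlt
    have hb0 : 0 ≤ y - t * h := by linarith
    by_cases hb : y - t * h = 0
    · refine hnotproj g (by linarith) (by linarith) ?_
      rw [E x y, hxz, hb, betaArc, if_pos le_rfl]
      exact orb_eq g h 0 0 _ _ 0 (by ring) (by ring)
    · refine hnotproj (g + (y - t * h)) (by linarith) (by linarith) ?_
      rw [E x y, hxz, betaArc, if_neg (by omega)]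
      exact orb_eq g h 0 (y - t * h) _ _ 0 (by ring) (by ring)
  have key2 : y - t * h = 0 → x - t * g ≤ -g - 1 := by
    intro hyz
    by_contra hlt
    push_neg at hlt
    refine hnotproj ((x - t * g) + g) (by linarith) (by linarith) ?_
    rw [E x y, hyz, betaArc, if_pos (by linarith)]
    exact orb_eq g h (x - t * g) 0 _ _ 0 (by ring) (by ring)
  have key3 : ¬(x - t * g = 0 ∧ y - t * h = h) := by
    rintro ⟨h1, h2⟩
    refine hnotproj 0 le_rfl (by linarith) ?_
    rw [E x y, h1, h2, betaArc, if_pos (by linarith)]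
    exact orb_eq g h 0 h _ _ (-1) (by ring) (by ring)
  have hx0 : x - t * g ≤ 0 := by linarith
  have hy0 : 0 ≤ y - t * h := by linarith
  refine ⟨tau_orb g h x y, ?_, ?_, ?_, ?_, ?_⟩
  · -- τα preprojective
    by_cases hc : x - t * g = 0
    · have hb := key1 hc
      have hbne : y - t * h ≠ h := fun hq => key3 ⟨hc, hq⟩
      refine preproj_of g h _ _ (t + 1) ?_ ?_
      · have : (t + 1) * g = t * g + g := by ring
        linarith
      · have : (t + 1) * h = t * h + h := by ring
        have : h + 1 ≤ y - t * h := by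
          rcases lt_or_eq_of_le hb with h' | h'
          · linarith
          · exact absurd h'.symm hbne
        have e : (t + 1) * h = t * h + h := by ring
        linarith
    · by_cases hc2 : y - t * h = 0
      · have hb := key2 hc2
        refine preproj_of g h _ _ (t - 1) ?_ ?_
        · have : (t - 1) * g = t * g - g := by ring
          linarith
        · have : (t - 1) * h = t * h - h := by ring
          linarith
      · refine preproj_of g h _ _ t (by omega) (by omega)
  · -- π[(x+1), y]
    by_cases hc : x - t * g = 0
    · have hb := key1 hc
      refine preproj_of g h _ _ (t + 1) ?_ ?_
      · have : (t + 1) * g = t * g + g := by ring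
        linarith
      · have : (t + 1) * h = t * h + h := by ring
        linarith
    · exact preproj_of g h _ _ t (by omega) hy
  · -- π[x, (y-1)]
    by_cases hc : y - t * h = 0
    · have hb := key2 hc
      refine preproj_of g h _ _ (t - 1) ?_ ?_
      · have : (t - 1) * g = t * g - g := by ring
        linarith
      · have : (t - 1) * h = t * h - h := by ring
        linarith
    · exact preproj_of g h _ _ t hx (by omega)
  · -- mesh set identification
    have sA : shiftFst (-1) (orbPP g h (x + 1) y) = orbPP g h x y := by
      rw [shiftFst_orb, show x + 1 + (-1) = x by ring]
    have sB : shiftSnd 1 (orbPP g h x (y - 1)) = orbPP g h x y := by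
      rw [shiftSnd_orb, show y - 1 + 1 = y by ring]
    ext B
    simp only [Set.mem_setOf_eq, Set.mem_insert_iff, Set.mem_singleton_iff, elemPP]
    constructor
    · rintro (hB | hB)
      · left
        exact (shiftFst_injective (-1) (sA.trans hB)).symm ▸ rfl
      · right
        exact (shiftSnd_injective 1 (sB.trans hB)).symm ▸ rfl
    · rintro (rfl | rfl)
      · exact Or.inl sA.symm
      · exact Or.inr sB.symm
  · -- mesh equality with arrows out of τα
    have sA : shiftFst (-1) (orbPP g h (x + 1) y) = orbPP g h x y := by
      rw [shiftFst_orb, show x + 1 + (-1) = x by ring]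
    have sB : shiftSnd 1 (orbPP g h x (y - 1)) = orbPP g h x y := by
      rw [shiftSnd_orb, show y - 1 + 1 = y by ring]
    have tA : shiftFst (-1) (orbPP g h (x + 1) (y - 1)) = orbPP g h x (y - 1) := by
      rw [shiftFst_orb, show x + 1 + (-1) = x by ring]
    have tB : shiftSnd 1 (orbPP g h (x + 1) (y - 1)) = orbPP g h (x + 1) y := by
      rw [shiftSnd_orb, show y - 1 + 1 = y by ring]
    ext B
    simp only [Set.mem_setOf_eq, elemPP, tA, tB]
    constructor
    · rintro (hB | hB)
      · exact Or.inr (shiftFst_injective (-1) (sA.trans hB)).symm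
      · exact Or.inl (shiftSnd_injective 1 (sB.trans hB)).symm
    · rintro (rfl | rfl)
      · exact Or.inr sB.symm
      · exact Or.inl sA.symm
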